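/- Let G be a (banner, C5)-free graph containing an odd antihole A such that (i) the stability number of G is at least 3, and (ii) no co-triangle of G contains two vertices of A. Then the complement of G contains a triangle-free connected component O that contains all of A. -/

import Mathlib

open SimpleGraph

/-- The banner: a chordless 4-cycle 0-1-2-3-0 together with a fifth vertex 4
adjacent to exactly one vertex (vertex 0) of the cycle. -/
def banner : SimpleGraph (Fin 5) :=
  SimpleGraph.fromRel (fun i j =>
    (i = 0 ∧ j = 1) ∨ (i = 1 ∧ j = 2) ∨ (i = 2 ∧ j = 3) ∨ (i = 3 ∧ j = 0) ∨ (i = 0 ∧ j = 4))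

/-- A graph is banner-free if it has no induced subgraph isomorphic to the banner. -/
def BannerFree {V : Type*} (G : SimpleGraph V) : Prop := ¬ Nonempty (banner ↪g G)

/-- A graph is C5-free if it has no induced subgraph isomorphic to the chordless 5-cycle. -/
def C5Free {V : Type*} (G : SimpleGraph V) : Prop :=
  ¬ Nonempty (SimpleGraph.cycleGraph 5 ↪g G)

/-- A graph is odd-hole-free if it has no induced chordless cycle of odd length `n ≥ 5`
(odd holes are the odd chordless cycles with at least four, hence at least five, vertices). -/
def OddHoleFree {V : Type*} (G : SimpleGraph V) : Prop :=
  ∀ n : ℕ, 5 ≤ n → Odd n → ¬ Nonempty (SimpleGraph.cycleGraph n ↪g G)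

/-- `A` is an odd antihole of `G`: the subgraph induced by `A` is isomorphic to the
complement of a chordless cycle on an odd number `n ≥ 5` of vertices. -/
def IsOddAntihole {V : Type*} (G : SimpleGraph V) (A : Set V) : Prop :=
  ∃ n : ℕ, 5 ≤ n ∧ Odd n ∧ Nonempty ((SimpleGraph.cycleGraph n)ᶜ ≃g G.induce A)

/-- `H` is a homogeneous set of `G`: `2 ≤ |H| < |V(G)|` and every vertex outside `H`
is adjacent to all vertices of `H` or to none of them. -/
def IsHomogeneous {V : Type*} (G : SimpleGraph V) (H : Set V) : Prop :=
  2 ≤ H.ncard ∧ H ≠ Set.univ ∧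
    ∀ v ∉ H, (∀ h ∈ H, G.Adj v h) ∨ (∀ h ∈ H, ¬ G.Adj v h)

/-- A graph is perfect if every induced subgraph has chromatic number equal to
its clique number. -/
def IsPerfect {V : Type*} (G : SimpleGraph V) : Prop :=
  ∀ S : Set V, (G.induce S).chromaticNumber = ((G.induce S).cliqueNum : ℕ∞)

/-- A graph is perfectly divisible if every induced subgraph `G[S]` contains a set `X`
of vertices meeting all largest cliques of `G[S]` and inducing a perfect graph. -/
def PerfectlyDivisible {V : Type*} (G : SimpleGraph V) : Prop :=
  ∀ S : Set V, ∃ X ⊆ S, IsPerfect (G.induce X) ∧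
    ∀ t : Finset V, ↑t ⊆ S → G.IsNClique ((G.induce S).cliqueNum) t → ∃ x ∈ X, x ∈ t

/-- A graph is `k`-divisible if the vertex set of each of its induced subgraphs `G[S]`
having at least one edge can be partitioned into `k` sets, none of which contains a
clique of size `ω(G[S])`.  (A graph with no edges is trivially `k`-divisible.) -/
def KDivisible {V : Type*} (G : SimpleGraph V) (k : ℕ) : Prop :=
  ∀ S : Set V, (∃ a ∈ S, ∃ b ∈ S, G.Adj a b) →
    ∃ P : Fin k → Set V, (∀ v ∈ S, ∃! i, v ∈ P i) ∧
      ∀ i, P i ⊆ S ∧ ¬ ∃ t : Finset V, ↑t ⊆ P i ∧ G.IsNClique ((G.induce S).cliqueNum) t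

/-- The maximum total weight `α_w(G)` of a stable (independent) set of the weighted
graph `G`; stable sets of `G` are exactly the cliques of the complement of `G`. -/
noncomputable def alphaW {V : Type*} (G : SimpleGraph V) (w : V → ℤ) : ℤ :=
  sSup {x : ℤ | ∃ s : Finset V, Gᶜ.IsClique (↑s : Set V) ∧ x = ∑ v ∈ s, w v}

/-- `C` is a clique cutset of the connected graph `G` if `C` is a clique and
deleting `C` from `G` leaves a disconnected graph. -/
def IsCliqueCutset {V : Type*} (G : SimpleGraph V) (C : Set V) : Prop :=
  G.Connected ∧ G.IsClique C ∧ ¬ (G.induce Cᶜ).Preconnected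

/-- Let `G` be a (banner, C5)-free graph containing an odd antihole `A` such
that (i) `α(G) ≥ 3` (i.e. `G` has a co-triangle), and (ii) no co-triangle of `G` contains
two vertices of `A`.  Then the complement of `G` has a triangle-free connected component
whose vertex set contains all of `A`. -/
instance : DecidableRel banner.Adj :=
  fun a b => decidable_of_iff' _ (SimpleGraph.fromRel_adj _ a b)

section Aux

variable {V : Type*} {G : SimpleGraph V}

private lemma banner_of (hbf : BannerFree G) {v0 v1 v2 v3 v4 : V}
    (h01 : G.Adj v0 v1) (h12 : G.Adj v1 v2) (h23 : G.Adj v2 v3) (h30 : G.Adj v3 v0)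
    (h04 : G.Adj v0 v4)
    (n02 : ¬G.Adj v0 v2) (n13 : ¬G.Adj v1 v3) (n14 : ¬G.Adj v1 v4) (n24 : ¬G.Adj v2 v4)
    (n34 : ¬G.Adj v3 v4)
    (d02 : v0 ≠ v2) (d13 : v1 ≠ v3) (d14 : v1 ≠ v4) (d24 : v2 ≠ v4) (d34 : v3 ≠ v4) : False := by
  apply hbf
  have h10 := h01.symm; have h21 := h12.symm; have h32 := h23.symm; have h03 := h30.symm
  have h40 := h04.symm
  have n20 : ¬G.Adj v2 v0 := fun h => n02 h.symm
  have n31 : ¬G.Adj v3 v1 := fun h => n13 h.symm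
  have n41 : ¬G.Adj v4 v1 := fun h => n14 h.symm
  have n42 : ¬G.Adj v4 v2 := fun h => n24 h.symm
  have n43 : ¬G.Adj v4 v3 := fun h => n34 h.symm
  have d01 := h01.ne; have d12 := h12.ne; have d23 := h23.ne; have d30 := h30.ne
  have d04 := h04.ne
  have d10 := d01.symm; have d21 := d12.symm; have d32 := d23.symm; have d03 := d30.symm
  have d40 := d04.symm
  have d20 := d02.symm; have d31 := d13.symm; have d41 := d14.symm; have d42 := d24.symm
  have d43 := d34.symm
  refine ⟨⟨⟨![v0,v1,v2,v3,v4], ?_⟩, ?_⟩⟩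
  · intro i j
    fin_cases i <;> fin_cases j <;> intro hij <;>
      first
        | rfl
        | exact absurd hij (by assumption)
  · intro i j
    fin_cases i <;> fin_cases j <;>
      first
        | exact iff_of_false G.irrefl (by decide)
        | exact iff_of_true (by assumption) (by decide)
        | exact iff_of_false (by assumption) (by decide)

private lemma c5_of (hc5 : C5Free G) {v0 v1 v2 v3 v4 : V}
    (h01 : G.Adj v0 v1) (h12 : G.Adj v1 v2) (h23 : G.Adj v2 v3) (h34 : G.Adj v3 v4)
    (h40 : G.Adj v4 v0)
    (n02 : ¬G.Adj v0 v2) (n03 : ¬G.Adj v0 v3) (n13 : ¬G.Adj v1 v3) (n14 : ¬G.Adj v1 v4)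
    (n24 : ¬G.Adj v2 v4)
    (d02 : v0 ≠ v2) (d03 : v0 ≠ v3) (d13 : v1 ≠ v3) (d14 : v1 ≠ v4) (d24 : v2 ≠ v4) : False := by
  apply hc5
  have h10 := h01.symm; have h21 := h12.symm; have h32 := h23.symm; have h43 := h34.symm
  have h04 := h40.symm
  have n20 : ¬G.Adj v2 v0 := fun h => n02 h.symm
  have n30 : ¬G.Adj v3 v0 := fun h => n03 h.symm
  have n31 : ¬G.Adj v3 v1 := fun h => n13 h.symm
  have n41 : ¬G.Adj v4 v1 := fun h => n14 h.symm
  have n42 : ¬G.Adj v4 v2 := fun h => n24 h.symm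
  have d01 := h01.ne; have d12 := h12.ne; have d23 := h23.ne; have d34 := h34.ne
  have d40 := h40.ne
  have d10 := d01.symm; have d21 := d12.symm; have d32 := d23.symm; have d43 := d34.symm
  have d04 := d40.symm
  have d20 := d02.symm; have d30 := d03.symm; have d31 := d13.symm; have d41 := d14.symm
  have d42 := d24.symm
  refine ⟨⟨⟨![v0,v1,v2,v3,v4], ?_⟩, ?_⟩⟩
  · intro i j
    fin_cases i <;> fin_cases j <;> intro hij <;>
      first
        | rfl
        | exact absurd hij (by assumption)
  · intro i j
    fin_cases i <;> fin_cases j <;>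
      first
        | exact iff_of_false G.irrefl (by decide)
        | exact iff_of_true (by assumption) (by decide)
        | exact iff_of_false (by assumption) (by decide)

private lemma mk3 [DecidableEq V] {x y z : V}
    (dxy : x ≠ y) (dxz : x ≠ z) (dyz : y ≠ z)
    (nxy : ¬G.Adj x y) (nxz : ¬G.Adj x z) (nyz : ¬G.Adj y z) :
    Gᶜ.IsNClique 3 ({x, y, z} : Finset V) := by
  constructor
  · intro u hu v hv huv
    simp only [Finset.coe_insert, Finset.coe_singleton, Set.mem_insert_iff,
      Set.mem_singleton_iff] at hu hv
    rw [SimpleGraph.compl_adj]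
    rcases hu with rfl | rfl | rfl <;> rcases hv with rfl | rfl | rfl <;>
      first
        | exact absurd rfl huv
        | exact ⟨by assumption, by assumption⟩
        | exact ⟨Ne.symm (by assumption), fun h => absurd h.symm (by assumption)⟩
  · rw [Finset.card_insert_of_notMem (by simp [dxy, dxz]),
      Finset.card_insert_of_notMem (by simp [dyz]), Finset.card_singleton]

end Aux

open scoped Fin.NatCast Fin.CommRing

section Cyc

variable {V : Type*} {G : SimpleGraph V} {A : Set V} {n : ℕ} [NeZero n] {a : Fin n → V}

private lemma fin_cast_ne {c d : ℕ} (hc : c < n) (hd : d < n) (h : c ≠ d) :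
    (c : Fin n) ≠ (d : Fin n) := by
  simp only [ne_eq, Fin.ext_iff, Fin.val_natCast, Nat.mod_eq_of_lt hc, Nat.mod_eq_of_lt hd]
  exact h

private lemma fin_neg_cast {c : ℕ} (hc : c ≤ n) : -((c : ℕ) : Fin n) = ((n - c : ℕ) : Fin n) := by
  rw [neg_eq_iff_add_eq_zero, ← Nat.cast_add, show c + (n - c) = n from by omega,
    Fin.natCast_self]

private lemma cyc_nadj1
    (hadj : ∀ i j : Fin n, G.Adj (a i) (a j) ↔ ¬(i = j ∨ i - j = 1 ∨ j - i = 1))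
    (i : Fin n) : ¬ G.Adj (a i) (a (i + 1)) :=
  fun h => ((hadj i (i+1)).1 h) (Or.inr (Or.inr (by ring)))

private lemma cyc_adjc
    (hadj : ∀ i j : Fin n, G.Adj (a i) (a j) ↔ ¬(i = j ∨ i - j = 1 ∨ j - i = 1))
    (h7 : 7 ≤ n) {c : ℕ} (hc2 : 2 ≤ c) (hcn : c + 2 ≤ n) (i : Fin n) :
    G.Adj (a i) (a (i + (c : ℕ))) := by
  rw [hadj]
  rintro (h | h | h)
  · have h0 : ((c : ℕ) : Fin n) = ((0 : ℕ) : Fin n) := by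
      rw [Nat.cast_zero]; exact left_eq_add.mp h
    exact fin_cast_ne (by omega) (by omega) (by omega) h0
  · have h' : -((c : ℕ) : Fin n) = 1 := by rw [← h]; ring
    rw [fin_neg_cast (by omega)] at h'
    have h1 : ((n - c : ℕ) : Fin n) = ((1 : ℕ) : Fin n) := by rw [Nat.cast_one]; exact h'
    exact fin_cast_ne (by omega) (by omega) (by omega) h1
  · have h1 : ((c : ℕ) : Fin n) = ((1 : ℕ) : Fin n) := by
      rw [Nat.cast_one, ← h]; ring
    exact fin_cast_ne (by omega) (by omega) (by omega) h1

private lemma cyc_idx_ne (h7 : 7 ≤ n) {c : ℕ} (hc1 : 1 ≤ c) (hcn : c < n) (i : Fin n) :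
    i ≠ i + (c : ℕ) := by
  intro h
  have h0 : ((c : ℕ) : Fin n) = ((0 : ℕ) : Fin n) := by
    rw [Nat.cast_zero]; exact left_eq_add.mp h
  exact fin_cast_ne (by omega) (by omega) (by omega) h0

end Cyc

section Main

variable {V : Type*} {G : SimpleGraph V} {A : Set V} {n : ℕ} [NeZero n] {a : Fin n → V}

private lemma k1 [DecidableEq V] (h7 : 7 ≤ n)
    (hno2 : ∀ t : Finset V, Gᶜ.IsNClique 3 t → ∀ u ∈ t, ∀ w ∈ t, u ∈ A → w ∈ A → u = w)
    (haA : ∀ i, a i ∈ A) (hinj : Function.Injective a)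
    (hadj : ∀ i j : Fin n, G.Adj (a i) (a j) ↔ ¬(i = j ∨ i - j = 1 ∨ j - i = 1))
    {v : V} (hv : v ∉ A) (i : Fin n) (h1 : ¬G.Adj v (a i)) (h2 : ¬G.Adj v (a (i+1))) :
    False := by
  have hne1 : a i ≠ a (i+1) := by
    have h := cyc_idx_ne (n := n) h7 (c := 1) le_rfl (by omega) i
    rw [Nat.cast_one] at h
    exact fun hh => h (hinj hh)
  have hva : ∀ j : Fin n, v ≠ a j := fun j h => hv (h ▸ haA j)
  have nadj : ¬G.Adj (a i) (a (i+1)) := cyc_nadj1 hadj i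
  have tri := mk3 (G := G) (hva i) (hva (i+1)) hne1 h1 h2 nadj
  have := hno2 _ tri (a i) (by simp) (a (i+1)) (by simp) (haA i) (haA (i+1))
  exact hne1 this

private lemma d3 [DecidableEq V] (h7 : 7 ≤ n) (hc5 : C5Free G)
    (hno2 : ∀ t : Finset V, Gᶜ.IsNClique 3 t → ∀ u ∈ t, ∀ w ∈ t, u ∈ A → w ∈ A → u = w)
    (haA : ∀ i, a i ∈ A) (hinj : Function.Injective a)
    (hadj : ∀ i j : Fin n, G.Adj (a i) (a j) ↔ ¬(i = j ∨ i - j = 1 ∨ j - i = 1))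
    {v : V} (hv : v ∉ A) (i : Fin n) (h1 : ¬G.Adj v (a i)) (h2 : ¬G.Adj v (a (i+3))) :
    False := by
  have e2 : ((2:ℕ) : Fin n) = (2 : Fin n) := by norm_cast
  have e3 : ((3:ℕ) : Fin n) = (3 : Fin n) := by norm_cast
  have adj2 : ∀ w : Fin n, G.Adj (a w) (a (w+2)) := fun w => by
    have h := cyc_adjc hadj h7 (c := 2) le_rfl (by omega) w; rwa [e2] at h
  have adj3 : ∀ w : Fin n, G.Adj (a w) (a (w+3)) := fun w => by
    have h := cyc_adjc hadj h7 (c := 3) (by omega) (by omega) w; rwa [e3] at h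
  have hva : ∀ j : Fin n, v ≠ a j := fun j h => hv (h ▸ haA j)
  have hne1 : ∀ w : Fin n, a w ≠ a (w+1) := fun w => by
    have h := cyc_idx_ne (n := n) h7 (c := 1) le_rfl (by omega) w
    rw [Nat.cast_one] at h
    exact fun hh => h (hinj hh)
  have nad01 : ∀ w : Fin n, ¬G.Adj (a w) (a (w+1)) := cyc_nadj1 hadj
  have hadjv1 : G.Adj v (a (i+1)) := by
    by_contra hh; exact k1 h7 hno2 haA hinj hadj hv i h1 hh
  have hadjv2 : G.Adj v (a (i+2)) := by
    by_contra hh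
    apply k1 h7 hno2 haA hinj hadj hv (i+2) hh
    rw [show i+2+1 = i+3 by ring]; exact h2
  refine c5_of hc5 (v0 := v) (v1 := a (i+1)) (v2 := a (i+3)) (v3 := a i) (v4 := a (i+2))
    hadjv1 ?_ (adj3 i).symm (adj2 i) hadjv2.symm
    h2 h1 (fun h => nad01 i h.symm) ?_ ?_
    (hva (i+3)) (hva i) (hne1 i).symm ?_ ?_
  · have h := adj2 (i+1); rwa [show i+1+2 = i+3 by ring] at h
  · have h := nad01 (i+1); rwa [show i+1+1 = i+2 by ring] at h
  · have h := nad01 (i+2); rw [show i+2+1 = i+3 by ring] at h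
    exact fun hh => h hh.symm
  · have h := hne1 (i+1); rwa [show i+1+1 = i+2 by ring] at h
  · have h := hne1 (i+2); rw [show i+2+1 = i+3 by ring] at h
    exact h.symm

private lemma lemA [DecidableEq V] (h7 : 7 ≤ n) (hodd : Odd n)
    (hbf : BannerFree G) (hc5 : C5Free G)
    (hno2 : ∀ t : Finset V, Gᶜ.IsNClique 3 t → ∀ u ∈ t, ∀ w ∈ t, u ∈ A → w ∈ A → u = w)
    (haA : ∀ i, a i ∈ A) (hinj : Function.Injective a)
    (hadj : ∀ i j : Fin n, G.Adj (a i) (a j) ↔ ¬(i = j ∨ i - j = 1 ∨ j - i = 1))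
    {y z : V} (hyA : y ∉ A) (hzA : z ∉ A) (hyzne : y ≠ z) (hyz : ¬G.Adj y z)
    (j : Fin n) (hjy : ¬G.Adj y (a j)) (hjz : ¬G.Adj z (a j)) : False := by
  have e2 : ((2:ℕ) : Fin n) = (2 : Fin n) := by norm_cast
  have e3 : ((3:ℕ) : Fin n) = (3 : Fin n) := by norm_cast
  have adj2 : ∀ w : Fin n, G.Adj (a w) (a (w+2)) := fun w => by
    have h := cyc_adjc hadj h7 (c := 2) le_rfl (by omega) w; rwa [e2] at h
  have adj3 : ∀ w : Fin n, G.Adj (a w) (a (w+3)) := fun w => by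
    have h := cyc_adjc hadj h7 (c := 3) (by omega) (by omega) w; rwa [e3] at h
  have hva : ∀ (v : V), v ∉ A → ∀ w : Fin n, v ≠ a w := fun v hv w h => hv (h ▸ haA w)
  have dis01 : ∀ w : Fin n, a w ≠ a (w+1) := fun w => by
    have h := cyc_idx_ne (n := n) h7 (c := 1) le_rfl (by omega) w
    rw [Nat.cast_one] at h
    exact fun hh => h (hinj hh)
  have dis12 : ∀ w : Fin n, a (w+1) ≠ a (w+2) := fun w => by
    have h := dis01 (w+1); rwa [show w+1+1 = w+2 by ring] at h
  have dis23 : ∀ w : Fin n, a (w+2) ≠ a (w+3) := fun w => by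
    have h := dis01 (w+2); rwa [show w+2+1 = w+3 by ring] at h
  have nad01 : ∀ w : Fin n, ¬G.Adj (a w) (a (w+1)) := cyc_nadj1 hadj
  have nad12 : ∀ w : Fin n, ¬G.Adj (a (w+1)) (a (w+2)) := fun w => by
    have h := nad01 (w+1); rwa [show w+1+1 = w+2 by ring] at h
  have nad23 : ∀ w : Fin n, ¬G.Adj (a (w+2)) (a (w+3)) := fun w => by
    have h := nad01 (w+2); rwa [show w+2+1 = w+3 by ring] at h
  have step : ∀ w : Fin n, ¬G.Adj y (a w) → ¬G.Adj z (a w) →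
      ¬G.Adj y (a (w+2)) ∧ ¬G.Adj z (a (w+2)) := by
    intro w hy0 hz0
    have hy1 : G.Adj y (a (w+1)) := by
      by_contra hh; exact k1 h7 hno2 haA hinj hadj hyA w hy0 hh
    have hz1 : G.Adj z (a (w+1)) := by
      by_contra hh; exact k1 h7 hno2 haA hinj hadj hzA w hz0 hh
    have hy3 : G.Adj y (a (w+3)) := by
      by_contra hh; exact d3 h7 hc5 hno2 haA hinj hadj hyA w hy0 hh
    have hz3 : G.Adj z (a (w+3)) := by
      by_contra hh; exact d3 h7 hc5 hno2 haA hinj hadj hzA w hz0 hh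
    by_cases c2y : G.Adj y (a (w+2))
    · by_cases c2z : G.Adj z (a (w+2))
      · -- banner: C4 = y - a(w+1) - z - a(w+2), pendant a w at a(w+2)
        exact ((banner_of hbf
          (v0 := a (w+2)) (v1 := y) (v2 := a (w+1)) (v3 := z) (v4 := a w)
          c2y.symm hy1 hz1.symm c2z (adj2 w).symm
          (fun h => nad12 w h.symm) hyz hy0 (fun h => nad01 w h.symm) hz0
          (dis12 w).symm hyzne (hva y hyA w) (dis01 w).symm (hva z hzA w)) : False).elim
      · -- w+2 ∈ Mz \ My : banner 0=a(w+3),1=y,2=a(w+2),3=a w,4=z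
        exact ((banner_of hbf
          (v0 := a (w+3)) (v1 := y) (v2 := a (w+2)) (v3 := a w) (v4 := z)
          hy3.symm c2y (adj2 w).symm (adj3 w) hz3.symm
          (fun h => nad23 w h.symm) hy0 hyz (fun h => c2z h.symm) (fun h => hz0 h.symm)
          (dis23 w).symm (hva y hyA w) hyzne (hva z hzA (w+2)).symm (hva z hzA w).symm) : False).elim
    · by_cases c2z : G.Adj z (a (w+2))
      · -- w+2 ∈ My \ Mz : banner 0=a(w+3),1=z,2=a(w+2),3=a w,4=y
        exact ((banner_of hbf
          (v0 := a (w+3)) (v1 := z) (v2 := a (w+2)) (v3 := a w) (v4 := y)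
          hz3.symm c2z (adj2 w).symm (adj3 w) hy3.symm
          (fun h => nad23 w h.symm) hz0 (fun h => hyz h.symm) (fun h => c2y h.symm)
          (fun h => hy0 h.symm)
          (dis23 w).symm (hva z hzA w) hyzne.symm (hva y hyA (w+2)).symm (hva y hyA w).symm) : False).elim
      · exact ⟨c2y, c2z⟩
  have chain : ∀ k : ℕ,
      ¬G.Adj y (a (j + ((2*k : ℕ) : Fin n))) ∧ ¬G.Adj z (a (j + ((2*k : ℕ) : Fin n))) := by
    intro k
    induction k with
    | zero => simp only [Nat.mul_zero, Nat.cast_zero, add_zero]; exact ⟨hjy, hjz⟩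
    | succ k ih =>
      have e : ((2*(k+1) : ℕ) : Fin n) = ((2*k : ℕ) : Fin n) + 2 := by push_cast; ring
      rw [e, ← add_assoc]
      exact step _ ih.1 ih.2
  obtain ⟨m, hm⟩ := hodd
  have e1 : ((2*(m+1) : ℕ) : Fin n) = 1 := by
    rw [show 2*(m+1) = n + 1 from by omega]
    push_cast [Fin.natCast_self]
    ring
  have hlast := chain (m+1)
  rw [e1] at hlast
  exact k1 h7 hno2 haA hinj hadj hyA j hjy hlast.1

end Main

section MainB

variable {V : Type*} {G : SimpleGraph V} {A : Set V} {n : ℕ} [NeZero n] {a : Fin n → V}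

private lemma lemB [DecidableEq V] (h7 : 7 ≤ n) (hodd : Odd n)
    (hbf : BannerFree G) (hc5 : C5Free G)
    (hno2 : ∀ t : Finset V, Gᶜ.IsNClique 3 t → ∀ u ∈ t, ∀ w ∈ t, u ∈ A → w ∈ A → u = w)
    (haA : ∀ i, a i ∈ A) (hinj : Function.Injective a)
    (hadj : ∀ i j : Fin n, G.Adj (a i) (a j) ↔ ¬(i = j ∨ i - j = 1 ∨ j - i = 1))
    {x y z : V} (hxA : x ∉ A) (hyA : y ∉ A) (hzA : z ∉ A)
    (dxy : x ≠ y) (dxz : x ≠ z) (dyz : y ≠ z)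
    (nxy : ¬G.Adj x y) (nxz : ¬G.Adj x z) (nyz : ¬G.Adj y z)
    (i : Fin n) (hxi : ¬G.Adj x (a i)) (hyi : G.Adj y (a i)) (hzi : G.Adj z (a i)) :
    False := by
  have e2 : ((2:ℕ) : Fin n) = (2 : Fin n) := by norm_cast
  have adj2 : ∀ w : Fin n, G.Adj (a w) (a (w+2)) := fun w => by
    have h := cyc_adjc hadj h7 (c := 2) le_rfl (by omega) w; rwa [e2] at h
  have hva : ∀ (v : V), v ∉ A → ∀ w : Fin n, v ≠ a w := fun v hv w h => hv (h ▸ haA w)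
  have dis01 : ∀ w : Fin n, a w ≠ a (w+1) := fun w => by
    have h := cyc_idx_ne (n := n) h7 (c := 1) le_rfl (by omega) w
    rw [Nat.cast_one] at h
    exact fun hh => h (hinj hh)
  have dis12 : ∀ w : Fin n, a (w+1) ≠ a (w+2) := fun w => by
    have h := dis01 (w+1); rwa [show w+1+1 = w+2 by ring] at h
  have nad01 : ∀ w : Fin n, ¬G.Adj (a w) (a (w+1)) := cyc_nadj1 hadj
  have nad12 : ∀ w : Fin n, ¬G.Adj (a (w+1)) (a (w+2)) := fun w => by
    have h := nad01 (w+1); rwa [show w+1+1 = w+2 by ring] at h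
  have Dxy : ∀ w : Fin n, ¬G.Adj x (a w) → ¬G.Adj y (a w) → False := fun w h1 h2 =>
    lemA h7 hodd hbf hc5 hno2 haA hinj hadj hxA hyA dxy nxy w h1 h2
  have Dxz : ∀ w : Fin n, ¬G.Adj x (a w) → ¬G.Adj z (a w) → False := fun w h1 h2 =>
    lemA h7 hodd hbf hc5 hno2 haA hinj hadj hxA hzA dxz nxz w h1 h2
  have Dyz : ∀ w : Fin n, ¬G.Adj y (a w) → ¬G.Adj z (a w) → False := fun w h1 h2 =>
    lemA h7 hodd hbf hc5 hno2 haA hinj hadj hyA hzA dyz nyz w h1 h2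
  have bT1 : ∀ (u v w : V), ¬G.Adj u v → ¬G.Adj u w → ¬G.Adj v w → u ≠ v → u ≠ w → v ≠ w →
      u ∉ A → ∀ p : Fin n, ¬G.Adj u (a p) → G.Adj u (a (p+1)) → G.Adj v (a p) →
      G.Adj v (a (p+1)) → G.Adj w (a p) → G.Adj w (a (p+1)) → False := by
    intro u v w huv huw hvw duv duw dvw huA p h1 h2 h3 h4 h5 h6
    exact banner_of hbf (v0 := a (p+1)) (v1 := v) (v2 := a p) (v3 := w) (v4 := u)
      h4.symm h3 h5.symm h6 h2.symm
      (fun h => nad01 p h.symm) hvw (fun h => huv h.symm) (fun h => h1 h.symm)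
      (fun h => huw h.symm)
      (dis01 p).symm dvw duv.symm (hva u huA p).symm duw.symm
  have N : ∀ w : Fin n, ¬G.Adj x (a w) ∨ ¬G.Adj y (a w) ∨ ¬G.Adj z (a w) := by
    have Nstep : ∀ w : Fin n, (¬G.Adj x (a w) ∨ ¬G.Adj y (a w) ∨ ¬G.Adj z (a w)) →
        (¬G.Adj x (a (w+1)) ∨ ¬G.Adj y (a (w+1)) ∨ ¬G.Adj z (a (w+1))) := by
      intro w hw
      by_contra hcon
      push_neg at hcon
      obtain ⟨ax1, ay1, az1⟩ := hcon
      rcases hw with h | h | h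
      · have hy' : G.Adj y (a w) := by by_contra hh; exact Dxy w h hh
        have hz' : G.Adj z (a w) := by by_contra hh; exact Dxz w h hh
        exact bT1 x y z nxy nxz nyz dxy dxz dyz hxA w h ax1 hy' ay1 hz' az1
      · have hx' : G.Adj x (a w) := by by_contra hh; exact Dxy w hh h
        have hz' : G.Adj z (a w) := by by_contra hh; exact Dyz w h hh
        exact bT1 y x z (fun hh => nxy hh.symm) nyz nxz dxy.symm dyz dxz hyA w h ay1
          hx' ax1 hz' az1
      · have hx' : G.Adj x (a w) := by by_contra hh; exact Dxz w hh h
        have hy' : G.Adj y (a w) := by by_contra hh; exact Dyz w hh h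
        exact bT1 z x y (fun hh => nxz hh.symm) (fun hh => nyz hh.symm) nxy dxz.symm
          dyz.symm dxy hzA w h az1 hx' ax1 hy' ay1
    have base : ∀ k : ℕ, ¬G.Adj x (a (i + ((k : ℕ) : Fin n))) ∨
        ¬G.Adj y (a (i + ((k : ℕ) : Fin n))) ∨ ¬G.Adj z (a (i + ((k : ℕ) : Fin n))) := by
      intro k
      induction k with
      | zero => simp only [Nat.cast_zero, add_zero]; exact Or.inl hxi
      | succ k ih =>
        have e : ((k+1 : ℕ) : Fin n) = ((k : ℕ) : Fin n) + 1 := by push_cast; ring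
        rw [e, ← add_assoc]
        exact Nstep _ ih
    intro w
    have hcast := base (w - i).val
    rwa [Fin.cast_val_eq_self (w - i), show i + (w - i) = w from by ring] at hcast
  have c5h : ∀ (u v : V), u ∉ A → v ∉ A → ¬G.Adj u v → u ≠ v →
      ∀ w : Fin n, ¬G.Adj v (a w) → ¬G.Adj u (a (w+2)) → G.Adj u (a w) → G.Adj u (a (w+1)) →
      G.Adj v (a (w+1)) → G.Adj v (a (w+2)) → False := by
    intro u v huA hvA huv duv w h1 h2 h3 h4 h5 h6
    exact c5_of hc5 (v0 := u) (v1 := a (w+1)) (v2 := v) (v3 := a (w+2)) (v4 := a w)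
      h4 h5.symm h6 (adj2 w).symm h3.symm
      huv h2 (nad12 w) (fun h => nad01 w h.symm) h1
      duv (hva u huA (w+2)) (dis12 w) (dis01 w).symm (hva v hvA w)
  have cstep : ∀ w : Fin n, ¬G.Adj x (a w) → ¬G.Adj x (a (w+2)) := by
    intro w hw
    have hyw : G.Adj y (a w) := by by_contra hh; exact Dxy w hw hh
    have hzw : G.Adj z (a w) := by by_contra hh; exact Dxz w hw hh
    rcases N (w+1) with h1 | h1 | h1
    · exact (k1 h7 hno2 haA hinj hadj hxA w hw h1).elim
    · have hx1 : G.Adj x (a (w+1)) := by by_contra hh; exact Dxy (w+1) hh h1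
      have hz1 : G.Adj z (a (w+1)) := by by_contra hh; exact Dyz (w+1) h1 hh
      rcases N (w+2) with h2 | h2 | h2
      · exact h2
      · exact (k1 h7 hno2 haA hinj hadj hyA (w+1) h1
          (by rw [show w+1+1 = w+2 by ring]; exact h2)).elim
      · exact (c5h z x hzA hxA (fun hh => nxz hh.symm) dxz.symm w hw h2 hzw hz1 hx1
          (by by_contra hh; exact Dxz (w+2) hh h2)).elim
    · have hx1 : G.Adj x (a (w+1)) := by by_contra hh; exact Dxz (w+1) hh h1
      have hy1 : G.Adj y (a (w+1)) := by by_contra hh; exact Dyz (w+1) hh h1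
      rcases N (w+2) with h2 | h2 | h2
      · exact h2
      · exact (c5h y x hyA hxA (fun hh => nxy hh.symm) dxy.symm w hw h2 hyw hy1 hx1
          (by by_contra hh; exact Dxy (w+2) hh h2)).elim
      · exact (k1 h7 hno2 haA hinj hadj hzA (w+1) h1
          (by rw [show w+1+1 = w+2 by ring]; exact h2)).elim
  have chain : ∀ k : ℕ, ¬G.Adj x (a (i + ((2*k : ℕ) : Fin n))) := by
    intro k
    induction k with
    | zero => simp only [Nat.mul_zero, Nat.cast_zero, add_zero]; exact hxi
    | succ k ih =>
      have e : ((2*(k+1) : ℕ) : Fin n) = ((2*k : ℕ) : Fin n) + 2 := by push_cast; ring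
      rw [e, ← add_assoc]
      exact cstep _ ih
  obtain ⟨m, hm⟩ := hodd
  have e1 : ((2*(m+1) : ℕ) : Fin n) = 1 := by
    rw [show 2*(m+1) = n + 1 from by omega]
    push_cast [Fin.natCast_self]
    ring
  have hlast := chain (m+1)
  rw [e1] at hlast
  exact k1 h7 hno2 haA hinj hadj hxA i hxi hlast

end MainB

theorem stmt_0 {V : Type*} [Fintype V] (G : SimpleGraph V)
    (hbf : BannerFree G) (hc5 : C5Free G)
    (A : Set V) (hA : IsOddAntihole G A)
    (halpha : ∃ t : Finset V, Gᶜ.IsNClique 3 t)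
    (hno2 : ∀ t : Finset V, Gᶜ.IsNClique 3 t →
      ∀ a ∈ t, ∀ b ∈ t, a ∈ A → b ∈ A → a = b) :
    ∃ O : Gᶜ.ConnectedComponent, A ⊆ O.supp ∧
      ∀ t : Finset V, ↑t ⊆ O.supp → ¬ Gᶜ.IsNClique 3 t := by
  classical
  obtain ⟨n0, hn5, hodd, ⟨φ⟩⟩ := hA
  obtain ⟨m, rfl⟩ : ∃ m, n0 = m + 2 := ⟨n0 - 2, by omega⟩
  set a : Fin (m+2) → V := fun i => ((φ i : A) : V) with ha
  have haA : ∀ i, a i ∈ A := fun i => (φ i).prop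
  have hinj : Function.Injective a := fun i j h => φ.injective (Subtype.ext h)
  have hadj : ∀ i j : Fin (m+2), G.Adj (a i) (a j) ↔ ¬(i = j ∨ i - j = 1 ∨ j - i = 1) := by
    intro i j
    have h1 : G.Adj (a i) (a j) ↔ (G.induce A).Adj (φ i) (φ j) := Iff.rfl
    rw [h1, φ.map_adj_iff, SimpleGraph.compl_adj, SimpleGraph.cycleGraph_adj]
    constructor
    · rintro ⟨hne, hcyc⟩ (h | h | h)
      · exact hne h
      · exact hcyc (Or.inl h)
      · exact hcyc (Or.inr h)
    · intro h
      exact ⟨fun hh => h (Or.inl hh), fun hh => h (Or.inr hh)⟩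
  have hsurj : ∀ v ∈ A, ∃ i, a i = v := fun v hv =>
    ⟨φ.symm ⟨v, hv⟩, by simp [ha]⟩
  have toAdj : ∀ {u v : V}, ¬Gᶜ.Adj u v → u ≠ v → G.Adj u v := by
    intro u v h hne
    by_contra hh
    exact h ((G.compl_adj u v).mpr ⟨hne, hh⟩)
  have toNAdj : ∀ {u v : V}, Gᶜ.Adj u v → ¬G.Adj u v := fun h => ((G.compl_adj _ _).mp h).2
  by_cases h5 : m + 2 = 5
  · exfalso
    obtain rfl : m = 3 := by omega
    refine c5_of hc5 (v0 := a 0) (v1 := a 2) (v2 := a 4) (v3 := a 1) (v4 := a 3)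
      ?_ ?_ ?_ ?_ ?_ ?_ ?_ ?_ ?_ ?_ ?_ ?_ ?_ ?_ ?_ <;>
      first
        | (refine (hadj _ _).2 ?_; decide)
        | (refine fun h => ((hadj _ _).1 h) ?_; decide)
        | (refine hinj.ne ?_; decide)
  · have h7 : 7 ≤ m + 2 := by obtain ⟨mm, hmm⟩ := hodd; omega
    have nad01 : ∀ w : Fin (m+2), ¬G.Adj (a w) (a (w+1)) := cyc_nadj1 hadj
    have dis01 : ∀ w : Fin (m+2), a w ≠ a (w+1) := fun w => by
      have h := cyc_idx_ne (n := m+2) h7 (c := 1) le_rfl (by omega) w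
      rw [Nat.cast_one] at h
      exact fun hh => h (hinj hh)
    refine ⟨Gᶜ.connectedComponentMk (a 0), ?_, ?_⟩
    · have hreach : ∀ k : ℕ, Gᶜ.Reachable (a ((k : ℕ) : Fin (m+2))) (a 0) := by
        intro k
        induction k with
        | zero => rw [Nat.cast_zero]
        | succ k ih =>
          have e : ((k+1 : ℕ) : Fin (m+2)) = ((k : ℕ) : Fin (m+2)) + 1 := by push_cast; ring
          rw [e]
          have hstep : Gᶜ.Adj (a (((k:ℕ) : Fin (m+2)) + 1)) (a ((k:ℕ) : Fin (m+2))) :=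
            (G.compl_adj _ _).mpr ⟨(dis01 _).symm, fun h => nad01 _ h.symm⟩
          exact hstep.reachable.trans ih
      intro v hv
      obtain ⟨i, rfl⟩ := hsurj v hv
      rw [SimpleGraph.ConnectedComponent.mem_supp_iff]
      apply SimpleGraph.ConnectedComponent.sound
      have h := hreach i.val
      rwa [Fin.cast_val_eq_self] at h
    · intro t hts htri
      obtain ⟨x, y, z, dxy, dxz, dyz, rfl⟩ := Finset.card_eq_three.mp htri.card_eq
      have axy : Gᶜ.Adj x y := htri.isClique (by simp) (by simp) dxy
      have axz : Gᶜ.Adj x z := htri.isClique (by simp) (by simp) dxz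
      have ayz : Gᶜ.Adj y z := htri.isClique (by simp) (by simp) dyz
      have hxO : x ∈ (Gᶜ.connectedComponentMk (a 0)).supp := hts (by simp)
      have hyO : y ∈ (Gᶜ.connectedComponentMk (a 0)).supp := hts (by simp)
      have hzO : z ∈ (Gᶜ.connectedComponentMk (a 0)).supp := hts (by simp)
      set O := Gᶜ.connectedComponentMk (a 0) with hOdef
      set P : ℕ → Prop := fun d => ∃ (X Y Z : V) (i : Fin (m+2)),
        Gᶜ.Adj X Y ∧ Gᶜ.Adj X Z ∧ Gᶜ.Adj Y Z ∧ X ∈ O.supp ∧ Y ∈ O.supp ∧ Z ∈ O.supp ∧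
        ∃ p : Gᶜ.Walk (a i) X, p.length ≤ d with hPdef
      have hPex : ∃ d, P d := by
        have hre : Gᶜ.Reachable (a 0) x := (SimpleGraph.ConnectedComponent.exact hxO).symm
        obtain ⟨p⟩ := hre
        exact ⟨p.length, x, y, z, 0, axy, axz, ayz, hxO, hyO, hzO, p, le_rfl⟩
      obtain ⟨X, Y, Z, i, aXY, aXZ, aYZ, hXO, hYO, hZO, p, hplen⟩ := Nat.find_spec hPex
      set d0 := Nat.find hPex with hd0def
      have hmin : ∀ d, d < d0 → ¬ P d := fun d hd => Nat.find_min hPex hd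
      have hpd : p.length = d0 := by
        rcases lt_or_eq_of_le hplen with h | h
        · exact absurd ⟨X, Y, Z, i, aXY, aXZ, aYZ, hXO, hYO, hZO, p, le_rfl⟩ (hmin _ h)
        · exact h
      by_cases hd0z : d0 = 0
      · have hX : a i = X := SimpleGraph.Walk.eq_of_length_eq_zero (by rw [hpd, hd0z])
        have tri3 := mk3 (G := G) aXY.ne aXZ.ne aYZ.ne (toNAdj aXY) (toNAdj aXZ) (toNAdj aYZ)
        have hYA : Y ∉ A := by
          intro hmem
          exact aXY.ne (hno2 _ tri3 X (by simp) Y (by simp) (hX ▸ haA i) hmem)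
        have hZA : Z ∉ A := by
          intro hmem
          exact aXZ.ne (hno2 _ tri3 X (by simp) Z (by simp) (hX ▸ haA i) hmem)
        refine lemA h7 hodd hbf hc5 hno2 haA hinj hadj hYA hZA aYZ.ne (toNAdj aYZ) i ?_ ?_
        · intro h
          apply toNAdj aXY
          rw [← hX]
          exact h.symm
        · intro h
          apply toNAdj aXZ
          rw [← hX]
          exact h.symm
      · obtain ⟨d1, hd1⟩ : ∃ d1, d0 = d1 + 1 := ⟨d0 - 1, by omega⟩
        have hXnai : X ≠ a i := by
          intro h
          refine hmin 0 (by omega) ⟨a i, Y, Z, i, ?_, ?_, aYZ, ?_, hYO, hZO,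
            SimpleGraph.Walk.nil, by simp⟩
          · rw [← h]; exact aXY
          · rw [← h]; exact aXZ
          · rw [← h]; exact hXO
        obtain ⟨u, hXu, q, hq⟩ := SimpleGraph.Walk.exists_eq_cons_of_ne hXnai p.reverse
        have hql : q.length = d1 := by
          have h := congrArg SimpleGraph.Walk.length hq
          rw [SimpleGraph.Walk.length_reverse, hpd] at h
          simp only [SimpleGraph.Walk.length_cons] at h
          omega
        have hqrevlen : q.reverse.length = d1 := by
          rw [SimpleGraph.Walk.length_reverse]; exact hql
        have huO : u ∈ O.supp := by
          rw [SimpleGraph.ConnectedComponent.mem_supp_iff]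
          have h1 : Gᶜ.connectedComponentMk u = Gᶜ.connectedComponentMk X :=
            SimpleGraph.ConnectedComponent.sound hXu.symm.reachable
          rw [h1]
          exact hXO
        by_cases huY : u = Y
        · exact hmin d1 (by omega) ⟨u, X, Z, i, hXu.symm,
            (by rw [huY]; exact aYZ), aXZ, huO, hXO, hZO, q.reverse, le_of_eq hqrevlen⟩
        by_cases huZ : u = Z
        · exact hmin d1 (by omega) ⟨u, X, Y, i, hXu.symm,
            (by rw [huZ]; exact aYZ.symm), aXY, huO, hXO, hYO, q.reverse, le_of_eq hqrevlen⟩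
        by_cases hauY : Gᶜ.Adj u Y
        · exact hmin d1 (by omega) ⟨u, X, Y, i, hXu.symm, hauY, aXY, huO, hXO, hYO,
            q.reverse, le_of_eq hqrevlen⟩
        by_cases hauZ : Gᶜ.Adj u Z
        · exact hmin d1 (by omega) ⟨u, X, Z, i, hXu.symm, hauZ, aXZ, huO, hXO, hZO,
            q.reverse, le_of_eq hqrevlen⟩
        by_cases hd1z : d1 = 0
        · have hu : u = a i := SimpleGraph.Walk.eq_of_length_eq_zero (p := q) (by rw [hql, hd1z])
          have notA : ∀ (T U W : V), Gᶜ.Adj T U → Gᶜ.Adj T W → Gᶜ.Adj U W →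
              T ∈ O.supp → U ∈ O.supp → W ∈ O.supp → T ∉ A := by
            intro T U W h1 h2 h3 m1 m2 m3 hmem
            obtain ⟨jj, hjj⟩ := hsurj T hmem
            refine hmin 0 (by omega) ⟨a jj, U, W, jj, ?_, ?_, h3, ?_, m2, m3,
              SimpleGraph.Walk.nil, by simp⟩
            · rw [hjj]; exact h1
            · rw [hjj]; exact h2
            · rw [hjj]; exact m1
          have hXA : X ∉ A := notA X Y Z aXY aXZ aYZ hXO hYO hZO
          have hYA : Y ∉ A := notA Y X Z aXY.symm aYZ aXZ hYO hXO hZO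
          have hZA : Z ∉ A := notA Z X Y aXZ.symm aYZ.symm aXY hZO hXO hYO
          have hnaiY : a i ≠ Y := fun h => hYA (h ▸ haA i)
          have hnaiZ : a i ≠ Z := fun h => hZA (h ▸ haA i)
          refine lemB h7 hodd hbf hc5 hno2 haA hinj hadj hXA hYA hZA aXY.ne aXZ.ne aYZ.ne
            (toNAdj aXY) (toNAdj aXZ) (toNAdj aYZ) i ?_ ?_ ?_
          · rw [← hu]
            exact toNAdj hXu
          · have h := toAdj (show ¬Gᶜ.Adj (a i) Y from hu ▸ hauY) hnaiY
            exact h.symm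
          · have h := toAdj (show ¬Gᶜ.Adj (a i) Z from hu ▸ hauZ) hnaiZ
            exact h.symm
        · have huai : u ≠ a i := by
            intro h
            refine hmin 1 (by omega) ⟨X, Y, Z, i, aXY, aXZ, aYZ, hXO, hYO, hZO,
              SimpleGraph.Walk.cons (by rw [← h]; exact hXu.symm) SimpleGraph.Walk.nil, by simp⟩
          obtain ⟨w, huw, r, hr⟩ := SimpleGraph.Walk.exists_eq_cons_of_ne huai q
          have hrlen : r.length = d1 - 1 := by
            have h := congrArg SimpleGraph.Walk.length hr
            rw [hql] at h
            simp only [SimpleGraph.Walk.length_cons] at h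
            omega
          have hwX : ¬Gᶜ.Adj w X := by
            intro h
            exact hmin d1 (by omega) ⟨X, Y, Z, i, aXY, aXZ, aYZ, hXO, hYO, hZO,
              r.reverse.concat h,
              by rw [SimpleGraph.Walk.length_concat, SimpleGraph.Walk.length_reverse, hrlen]; omega⟩
          have hwY : ¬Gᶜ.Adj w Y := by
            intro h
            exact hmin d1 (by omega) ⟨Y, X, Z, i, aXY.symm, aYZ, aXZ, hYO, hXO, hZO,
              r.reverse.concat h,
              by rw [SimpleGraph.Walk.length_concat, SimpleGraph.Walk.length_reverse, hrlen]; omega⟩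
          have hwZ : ¬Gᶜ.Adj w Z := by
            intro h
            exact hmin d1 (by omega) ⟨Z, X, Y, i, aXZ.symm, aYZ.symm, aXY, hZO, hXO, hYO,
              r.reverse.concat h,
              by rw [SimpleGraph.Walk.length_concat, SimpleGraph.Walk.length_reverse, hrlen]; omega⟩
          have hwXne : w ≠ X := by
            intro h
            refine hmin (d1-1) (by omega) ⟨w, Y, Z, i, ?_, ?_, aYZ, ?_, hYO, hZO,
              r.reverse, by rw [SimpleGraph.Walk.length_reverse, hrlen]⟩
            · rw [h]; exact aXY
            · rw [h]; exact aXZ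
            · rw [h]; exact hXO
          have hwYne : w ≠ Y := by
            intro h
            refine hmin (d1-1) (by omega) ⟨w, X, Z, i, ?_, ?_, aXZ, ?_, hXO, hZO,
              r.reverse, by rw [SimpleGraph.Walk.length_reverse, hrlen]⟩
            · rw [h]; exact aXY.symm
            · rw [h]; exact aYZ
            · rw [h]; exact hYO
          have hwZne : w ≠ Z := by
            intro h
            refine hmin (d1-1) (by omega) ⟨w, X, Y, i, ?_, ?_, aXY, ?_, hXO, hYO,
              r.reverse, by rw [SimpleGraph.Walk.length_reverse, hrlen]⟩
            · rw [h]; exact aXZ.symm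
            · rw [h]; exact aYZ.symm
            · rw [h]; exact hZO
          exact banner_of hbf (v0 := w) (v1 := Y) (v2 := u) (v3 := Z) (v4 := X)
            (toAdj hwY hwYne)
            (toAdj (fun h => hauY h.symm) (fun h => huY h.symm))
            (toAdj hauZ huZ)
            (toAdj hwZ hwZne).symm
            (toAdj hwX hwXne)
            (toNAdj huw.symm)
            (toNAdj aYZ)
            (toNAdj aXY.symm)
            (toNAdj hXu.symm)
            (toNAdj aXZ.symm)
            huw.ne'
            aYZ.ne
            (aXY.ne).symm
            hXu.ne'
            (aXZ.ne).symm
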